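/- Let C : ℂ → Matrix (Fin p) (Fin n) ℂ, K : ℂ → Matrix (Fin n) (Fin n) ℂ, B : ℂ → Matrix (Fin n) (Fin m) ℂ, N : ℂ → Matrix (Fin n) (Fin (n*m)) ℂ be matrix-valued functions and σ₁, σ₂ ∈ ℂ points where K(σ₁) and K(σ₂) are invertible. Let V ∈ Matrix (Fin n) (Fin r) ℂ contain in its column span the columns of V₁ := K(σ₁)⁻¹ B(σ₁) and of V₂ := K(σ₂)⁻¹ N(σ₁) (I_m ⊗ V₁), and let W ∈ Matrix (Fin n) (Fin r) ℂ be such that Wᴴ K(σ₁) V and Wᴴ K(σ₂) V are invertible. Then the reduced second-level generalized transfer function Ĝ₂(σ₁,σ₂) := Ĉ(σ₂) K̂(σ₂)⁻¹ N̂(σ₁) (I_m ⊗ K̂(σ₁)⁻¹ B̂(σ₁)) with Ĉ(s)=C(s)V, K̂(s)=WᴴK(s)V, B̂(s)=WᴴB(s), N̂(s)=WᴴN(s)(I_m ⊗ V) satisfies Ĝ₂(σ₁,σ₂) = C(σ₂) K(σ₂)⁻¹ N(σ₁) (I_m ⊗ K(σ₁)⁻¹ B(σ₁)). -/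

import Mathlib

open Matrix Kronecker

theorem stmt_5 {n m p r : ℕ}
    (C : ℂ → Matrix (Fin p) (Fin n) ℂ)
    (K : ℂ → Matrix (Fin n) (Fin n) ℂ)
    (B : ℂ → Matrix (Fin n) (Fin m) ℂ)
    (N : ℂ → Matrix (Fin n) (Fin m × Fin n) ℂ)
    (σ₁ σ₂ : ℂ) (hK1 : IsUnit (K σ₁)) (hK2 : IsUnit (K σ₂))
    (V W : Matrix (Fin n) (Fin r) ℂ)
    (V₁ : Matrix (Fin n) (Fin m) ℂ) (hV₁ : V₁ = (K σ₁)⁻¹ * B σ₁)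
    (V₂ : Matrix (Fin n) (Fin m × Fin m) ℂ)
    (hV₂ : V₂ = (K σ₂)⁻¹ * (N σ₁ * ((1 : Matrix (Fin m) (Fin m) ℂ) ⊗ₖ V₁)))
    (hVspan₁ : ∃ X, V * X = V₁) (hVspan₂ : ∃ X, V * X = V₂)
    (hKhat1 : IsUnit (Wᴴ * K σ₁ * V)) (hKhat2 : IsUnit (Wᴴ * K σ₂ * V)) :
    (C σ₂ * V) * (Wᴴ * K σ₂ * V)⁻¹ *
        (Wᴴ * N σ₁ * ((1 : Matrix (Fin m) (Fin m) ℂ) ⊗ₖ V)) *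
        ((1 : Matrix (Fin m) (Fin m) ℂ) ⊗ₖ ((Wᴴ * K σ₁ * V)⁻¹ * (Wᴴ * B σ₁)))
      = C σ₂ * (K σ₂)⁻¹ * N σ₁ *
        ((1 : Matrix (Fin m) (Fin m) ℂ) ⊗ₖ ((K σ₁)⁻¹ * B σ₁)) := by
  obtain ⟨X₁, hX₁⟩ : ∃ X : Matrix (Fin r) (Fin m) ℂ, V * X = V₁ := hVspan₁
  obtain ⟨X₂, hX₂⟩ : ∃ X : Matrix (Fin r) (Fin m × Fin m) ℂ, V * X = V₂ := hVspan₂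
  have hd1 : IsUnit (Wᴴ * K σ₁ * V).det := (Matrix.isUnit_iff_isUnit_det _).mp hKhat1
  have hd2 : IsUnit (Wᴴ * K σ₂ * V).det := (Matrix.isUnit_iff_isUnit_det _).mp hKhat2
  have hKd1 : IsUnit (K σ₁).det := (Matrix.isUnit_iff_isUnit_det _).mp hK1
  have hKd2 : IsUnit (K σ₂).det := (Matrix.isUnit_iff_isUnit_det _).mp hK2
  have hB : K σ₁ * V₁ = B σ₁ := by
    rw [hV₁, Matrix.mul_nonsing_inv_cancel_left _ _ hKd1]
  have h1 : (Wᴴ * K σ₁ * V)⁻¹ * (Wᴴ * B σ₁) = X₁ := by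
    have : Wᴴ * B σ₁ = (Wᴴ * K σ₁ * V) * X₁ := by
      rw [Matrix.mul_assoc (Wᴴ * K σ₁) V X₁, hX₁, Matrix.mul_assoc, hB]
    rw [this, Matrix.nonsing_inv_mul_cancel_left _ _ hd1]
  have hNV : N σ₁ * ((1 : Matrix (Fin m) (Fin m) ℂ) ⊗ₖ V₁) = K σ₂ * V₂ := by
    rw [hV₂, Matrix.mul_nonsing_inv_cancel_left _ _ hKd2]
  have h2 : (Wᴴ * K σ₂ * V)⁻¹ * (Wᴴ * (K σ₂ * V₂)) = X₂ := by
    have : Wᴴ * (K σ₂ * V₂) = (Wᴴ * K σ₂ * V) * X₂ := by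
      rw [Matrix.mul_assoc (Wᴴ * K σ₂) V X₂, hX₂, Matrix.mul_assoc]
    rw [this, Matrix.nonsing_inv_mul_cancel_left _ _ hd2]
  calc (C σ₂ * V) * (Wᴴ * K σ₂ * V)⁻¹ *
        (Wᴴ * N σ₁ * ((1 : Matrix (Fin m) (Fin m) ℂ) ⊗ₖ V)) *
        ((1 : Matrix (Fin m) (Fin m) ℂ) ⊗ₖ ((Wᴴ * K σ₁ * V)⁻¹ * (Wᴴ * B σ₁)))
      = (C σ₂ * V) * ((Wᴴ * K σ₂ * V)⁻¹ *
        (Wᴴ * (N σ₁ * (((1 : Matrix (Fin m) (Fin m) ℂ) ⊗ₖ V) *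
          ((1 : Matrix (Fin m) (Fin m) ℂ) ⊗ₖ X₁))))) := by
        rw [h1]; simp only [Matrix.mul_assoc]
    _ = (C σ₂ * V) * X₂ := by
        rw [← Matrix.mul_kronecker_mul, Matrix.one_mul, hX₁, hNV, h2]
    _ = C σ₂ * V₂ := by rw [Matrix.mul_assoc, hX₂]
    _ = C σ₂ * (K σ₂)⁻¹ * N σ₁ *
        ((1 : Matrix (Fin m) (Fin m) ℂ) ⊗ₖ ((K σ₁)⁻¹ * B σ₁)) := by
        rw [hV₂, hV₁]; simp only [Matrix.mul_assoc]
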